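/- arXiv:1803.06445 — 3 statements merged into one kernel-verified Lean document; each statement's English description precedes it below -/
import Mathlib

section
/- The minority-based intersection on identified relations (tid-based definition) is non-monotone: there exist finite sets P, P', Q of (tid, value) pairs with P ⊆ P' such that P ∩_mb Q is not a subset of P' ∩_mb Q. Concretely, with P = {(1,a)}, P' = {(1,a),(3,a)}, Q = {(2,a)}, one has P ∩_mb Q = {(1,a)} but P' ∩_mb Q = {(2,a)}, so P ∩_mb Q ⊄ P' ∩_mb Q. -/
/-- Tid-based minority intersection on identified relations: for each value,
keep the tuples of the relation having the fewer duplicates of that value. -/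
def tidMbInter {α : Type*} [DecidableEq α] (P Q : Finset (ℕ × α)) :
    Finset (ℕ × α) :=
  (P.filter fun p =>
      (P.filter fun q => q.2 = p.2).card ≤ (Q.filter fun q => q.2 = p.2).card) ∪
    (Q.filter fun p =>
      (Q.filter fun q => q.2 = p.2).card < (P.filter fun q => q.2 = p.2).card)

/-- Non-monotonicity of the tid-based minority intersection: with
`P = {(1,a)} ⊆ P' = {(1,a),(3,a)}` and `Q = {(2,a)}`, we get
`P ∩_mb Q = {(1,a)}` but `P' ∩_mb Q = {(2,a)}`, so `P ∩_mb Q ⊄ P' ∩_mb Q`. -/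
theorem tidMbInter_not_monotone {α : Type*} [DecidableEq α] (a : α) :
    ({(1, a)} : Finset (ℕ × α)) ⊆ {(1, a), (3, a)} ∧
      tidMbInter ({(1, a)} : Finset (ℕ × α)) {(2, a)} = {(1, a)} ∧
      tidMbInter ({(1, a), (3, a)} : Finset (ℕ × α)) {(2, a)} = {(2, a)} ∧
      ¬ tidMbInter ({(1, a)} : Finset (ℕ × α)) {(2, a)} ⊆
          tidMbInter ({(1, a), (3, a)} : Finset (ℕ × α)) {(2, a)} := by
  simp [tidMbInter, Finset.filter_singleton, Finset.filter_insert,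
    Finset.subset_iff, Prod.ext_iff]
end

section
/- Loop-cutting lemma: let Σ be a finite alphabet with |Σ| = K, and let L ⊆ List Σ be a set of words closed under cutting loops, i.e., whenever a word w = u ++ [x] ++ v ++ [x] ++ z is in L (the letter x occurs at two positions), the word u ++ [x] ++ z obtained by deleting the segment between the two occurrences (keeping one occurrence of x) is also in L. If L contains a word of length greater than 2K, then L contains a word whose length lies in the interval [K+1, 2K]. -/
/-- If a list is not `Nodup`, it decomposes around two occurrences of some letter. -/
lemma exists_dup_decomp {α : Type*} :
    ∀ (l : List α), ¬ l.Nodup → ∃ (u v z : List α) (x : α),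
      l = u ++ [x] ++ v ++ [x] ++ z := by
  intro l
  induction l with
  | nil => intro h; exact absurd List.nodup_nil h
  | cons a l ih =>
    intro h
    rw [List.nodup_cons] at h
    push_neg at h
    by_cases ha : a ∈ l
    · obtain ⟨v, z, rfl⟩ := List.append_of_mem ha
      exact ⟨[], v, z, a, by simp⟩
    · obtain ⟨u, v, z, x, rfl⟩ := ih (h ha)
      exact ⟨a :: u, v, z, x, by simp⟩

/-- Loop-cutting lemma: over an alphabet of size `K`, if a set of words is
closed under cutting the segment between two occurrences of the same letter,
and it contains a word of length `> 2K`, then it contains a word whose length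
lies in `[K+1, 2K]`. -/
theorem loop_cutting {σ : Type*} [Fintype σ] (K : ℕ) (hK : Fintype.card σ = K)
    (L : Set (List σ))
    (hcut : ∀ (u v z : List σ) (x : σ),
      u ++ [x] ++ v ++ [x] ++ z ∈ L → u ++ [x] ++ z ∈ L)
    (hlong : ∃ w ∈ L, 2 * K < w.length) :
    ∃ w ∈ L, K + 1 ≤ w.length ∧ w.length ≤ 2 * K := by
  obtain ⟨w, hwL, hwlen⟩ := hlong
  suffices H : ∀ n, ∀ w ∈ L, w.length = n → 2 * K < w.length →
      ∃ w ∈ L, K + 1 ≤ w.length ∧ w.length ≤ 2 * K from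
    H w.length w hwL rfl hwlen
  intro n
  induction n using Nat.strong_induction_on with
  | _ n ih =>
    intro w hwL hn hlen
    have htake : (w.take (K + 1)).length = K + 1 := by
      rw [List.length_take]; omega
    have hnd : ¬ (w.take (K + 1)).Nodup := by
      intro hnd
      have := hnd.length_le_card
      rw [htake, hK] at this
      omega
    obtain ⟨u, v, z', x, hdec⟩ := exists_dup_decomp _ hnd
    have hw : w = u ++ [x] ++ v ++ [x] ++ (z' ++ w.drop (K + 1)) := by
      conv_lhs => rw [← List.take_append_drop (K + 1) w]
      rw [hdec]; simp
    have hmem : u ++ [x] ++ (z' ++ w.drop (K + 1)) ∈ L :=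
      hcut u v (z' ++ w.drop (K + 1)) x (by rw [← hw]; exact hwL)
    set w' : List σ := u ++ [x] ++ (z' ++ w.drop (K + 1)) with hw'
    have hvlen : v.length + 1 ≤ K := by
      have := congrArg List.length hdec
      rw [htake] at this
      simp at this
      omega
    have hlens : w'.length + (v.length + 1) = w.length := by
      have h1 := congrArg List.length hw
      simp [hw'] at h1 ⊢
      omega
    by_cases hsmall : w'.length ≤ 2 * K
    · exact ⟨w', hmem, by omega, hsmall⟩
    · exact ih w'.length (by omega) w' hmem rfl (by omega)
end

section
/- Combining the pigeonhole and loop-pumping lemmas: let Σ be a finite alphabet with |Σ| = K and let L ⊆ List Σ be nonempty and closed under duplicating loops (as above). Then either every word in L has length at most K, in which case L is finite (of cardinality at most K^0 + K^1 + ... + K^K), or L contains a word of length greater than K, in which case L is infinite. -/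
/-- Dichotomy for sets of words closed under duplicating loops over a finite
alphabet of size `K`: either all words have length at most `K` and the set is
finite (of cardinality at most `∑_{i=0}^{K} K^i`), or the set contains a word of
length `> K` and is infinite. -/
theorem finiteness_dichotomy {σ : Type*} [Fintype σ] (K : ℕ)
    (hK : Fintype.card σ = K) (L : Set (List σ)) (hne : L.Nonempty)
    (hdup : ∀ (u v z : List σ) (x : σ),
      u ++ [x] ++ v ++ [x] ++ z ∈ L →
        u ++ [x] ++ v ++ [x] ++ v ++ [x] ++ z ∈ L) :
    ((∀ w ∈ L, w.length ≤ K) ∧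
        ∃ hf : L.Finite, hf.toFinset.card ≤ ∑ i ∈ Finset.range (K + 1), K ^ i) ∨
      ((∃ w ∈ L, K < w.length) ∧ L.Infinite) := by
  classical
  by_cases hall : ∀ w ∈ L, w.length ≤ K
  · left
    refine ⟨hall, ?_⟩
    have hsub : L ⊆ {l : List σ | l.length ≤ K} := fun w hw => hall w hw
    have hf : L.Finite := (List.finite_length_le σ K).subset hsub
    refine ⟨hf, ?_⟩
    set S : ℕ → Finset (List σ) :=
      fun i => (Finset.univ : Finset (List.Vector σ i)).image List.Vector.toList with hS
    have hsub2 : hf.toFinset ⊆ (Finset.range (K + 1)).biUnion S := by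
      intro w hw
      rw [Set.Finite.mem_toFinset] at hw
      refine Finset.mem_biUnion.mpr ⟨w.length, Finset.mem_range.mpr ?_, ?_⟩
      · exact Nat.lt_succ_of_le (hall w hw)
      · exact Finset.mem_image.mpr ⟨⟨w, rfl⟩, Finset.mem_univ _, rfl⟩
    calc hf.toFinset.card ≤ ((Finset.range (K + 1)).biUnion S).card :=
          Finset.card_le_card hsub2
      _ ≤ ∑ i ∈ Finset.range (K + 1), (S i).card := Finset.card_biUnion_le
      _ ≤ ∑ i ∈ Finset.range (K + 1), K ^ i := by
          refine Finset.sum_le_sum fun i _ => ?_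
          calc (S i).card ≤ (Finset.univ : Finset (List.Vector σ i)).card := by
                rw [hS]; exact Finset.card_image_le
            _ = K ^ i := by rw [Finset.card_univ, card_vector, hK]
  · right
    push_neg at hall
    obtain ⟨w, hwL, hwlen⟩ := hall
    refine ⟨⟨w, hwL, hwlen⟩, ?_⟩
    -- pigeonhole: w has a duplicate letter
    have hnd : ¬ w.Nodup := fun h => absurd (hK ▸ h.length_le_card) (not_le.mpr hwlen)
    obtain ⟨x, hx⟩ := List.exists_duplicate_iff_not_nodup.mpr hnd
    have hsl : List.Sublist [x, x] w := List.duplicate_iff_sublist.mp hx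
    obtain ⟨r₁, r₂, hw12, hxr₁, hxr₂⟩ := List.cons_sublist_iff.mp hsl
    obtain ⟨r₃, r₄, hw34, hxr₃, -⟩ := List.cons_sublist_iff.mp hxr₂
    obtain ⟨u, t, hut⟩ := List.append_of_mem hxr₁
    obtain ⟨s, z', hsz⟩ := List.append_of_mem hxr₃
    have hw' : w = u ++ [x] ++ (t ++ s) ++ [x] ++ (z' ++ r₄) := by
      subst hw12 hw34 hut hsz; simp
    rw [hw'] at hwL
    set z := z' ++ r₄ with hz
    set v₀ := t ++ s with hv₀
    -- pumping sequence
    let vseq : ℕ → List σ := fun n => Nat.rec v₀ (fun _ vn => vn ++ [x] ++ vn) n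
    have hvsucc : ∀ n, vseq (n + 1) = vseq n ++ [x] ++ vseq n := fun n => rfl
    have hmem : ∀ n, u ++ [x] ++ vseq n ++ [x] ++ z ∈ L := by
      intro n
      induction n with
      | zero => exact hwL
      | succ n ih =>
        have := hdup u (vseq n) z x ih
        rw [hvsucc]
        simpa [List.append_assoc] using this
    have hlen : StrictMono fun n => (vseq n).length := by
      apply strictMono_nat_of_lt_succ
      intro n
      rw [hvsucc]
      simp [Nat.lt_succ_iff]
    have hlen2 : StrictMono fun n => (u ++ [x] ++ vseq n ++ [x] ++ z).length := by
      intro a b h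
      have := hlen h
      change (vseq a).length < (vseq b).length at this
      simp only [List.length_append]
      omega
    refine Set.infinite_of_injective_forall_mem (f := fun n => u ++ [x] ++ vseq n ++ [x] ++ z)
      ?_ hmem
    intro a b hab
    exact hlen2.injective (congrArg List.length hab)
end
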